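/- Let B be the (oriented) incidence matrix of a finite connected multigraph Γ without self-loops, with rows indexed by edges E and columns indexed by vertices V. Fix subsets E₀ ⊆ E and V₀ ⊆ V whose complements have equal size r, and let B' denote the r×r matrix obtained by deleting the rows in E₀ and the columns in V₀. Then the following are equivalent: (a) det(B') = ±1; (b) det(B') ≠ 0; (c) the edges of E \ E₀ form a spanning |V₀|-forest of Γ (a collection of |V₀| pairwise disjoint trees covering all vertices) in which each tree contains exactly one vertex of V₀. -/

import Mathlib

open Matrix

noncomputable section

/-- A finite multigraph without self-loops: each edge `e` has a head and a tail. -/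
structure Multigraph where
  V : Type
  E : Type
  fintypeV : Fintype V
  decEqV : DecidableEq V
  fintypeE : Fintype E
  decEqE : DecidableEq E
  head : E → V
  tail : E → V
  loopless : ∀ e, head e ≠ tail e

namespace Multigraph

variable (G : Multigraph)

instance : Fintype G.V := G.fintypeV
instance : DecidableEq G.V := G.decEqV
instance : Fintype G.E := G.fintypeE
instance : DecidableEq G.E := G.decEqE

/-- `v` and `w` are joined by some edge belonging to `F`. -/
def edgeRel (F : Finset G.E) (v w : G.V) : Prop :=
  ∃ e ∈ F, (G.head e = v ∧ G.tail e = w) ∨ (G.head e = w ∧ G.tail e = v)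

/-- Reachability using only edges in `F`. -/
def Reach (F : Finset G.E) : G.V → G.V → Prop :=
  Relation.EqvGen (G.edgeRel F)

/-- The multigraph is connected. -/
def Connected : Prop := ∀ v w : G.V, G.Reach Finset.univ v w

/-- The number of edges joining `v` and `w`. -/
def edgeCount (v w : G.V) : ℕ :=
  Nat.card {e : G.E // (G.head e = v ∧ G.tail e = w) ∨ (G.head e = w ∧ G.tail e = v)}

/-- The degree of a vertex. -/
def degree (v : G.V) : ℕ :=
  Nat.card {e : G.E // G.head e = v ∨ G.tail e = v}

/-- The Laplacian matrix of the multigraph. -/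
def laplacian : Matrix G.V G.V ℤ :=
  Matrix.of fun v w => if v = w then (G.degree v : ℤ) else -(G.edgeCount v w : ℤ)

/-- The reduced Laplacian: delete the row and column of the sink `s`. -/
def reducedLaplacian (s : G.V) : Matrix {v : G.V // v ≠ s} {v : G.V // v ≠ s} ℤ :=
  Matrix.of fun v w => G.laplacian v.1 w.1

/-- A spanning tree, seen as a set of edges: it connects all vertices and has
`|V| - 1` edges. -/
def IsSpanningTree (T : Finset G.E) : Prop :=
  (∀ v w : G.V, G.Reach T v w) ∧ T.card + 1 = Fintype.card G.V

/-- The number of connected components of the spanning subgraph with edge set `F`. -/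
def numComponents (F : Finset G.E) : ℕ :=
  Nat.card (Quotient (Relation.EqvGen.setoid (G.edgeRel F)))

/-- `F` is the edge set of a spanning forest: the number of connected components of
`(V, F)` equals `|V| - |F|` (i.e. `F` is acyclic). -/
def IsForest (F : Finset G.E) : Prop :=
  G.numComponents F + F.card = Fintype.card G.V

end Multigraph


lemma det_eq_prod_diag {n : Type*} [Fintype n] [DecidableEq n] (M : Matrix n n ℤ)
    (f : n → ℕ) (h : ∀ i j, M i j ≠ 0 → j = i ∨ f j < f i) :
    M.det = ∏ i, M i i := by
  rw [Matrix.det_apply]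
  rw [Finset.sum_eq_single (1 : Equiv.Perm n)]
  · simp
  · intro σ _ hσ
    have hprod : ∏ i, M (σ i) i = 0 := by
      by_contra hp
      have hcases : ∀ i, i = σ i ∨ f i < f (σ i) := by
        intro i
        exact h (σ i) i (by
          rw [← Ne, Finset.prod_ne_zero_iff] at hp
          exact hp i (Finset.mem_univ i))
      have hle : ∀ i ∈ Finset.univ, f i ≤ f (σ i) := by
        intro i _
        rcases hcases i with h1 | h2
        · rw [← h1]
        · exact le_of_lt h2
      obtain ⟨i₀, hi₀⟩ : ∃ i₀, σ i₀ ≠ i₀ := by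
        by_contra hc
        push_neg at hc
        exact hσ (Equiv.ext hc)
      have hlt : ∑ i, f i < ∑ i, f (σ i) :=
        Finset.sum_lt_sum hle ⟨i₀, Finset.mem_univ _, by
          rcases hcases i₀ with h1 | h2
          · exact absurd h1.symm hi₀
          · exact h2⟩
      rw [Equiv.sum_comp σ f] at hlt
      exact lt_irrefl _ hlt
    rw [hprod, smul_zero]
  · intro h; exact absurd (Finset.mem_univ _) h

namespace Multigraph

lemma card_le_numComponents_add_card (G : Multigraph) (F : Finset G.E) :
    Fintype.card G.V ≤ G.numComponents F + F.card := by
  classical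
  set s := Relation.EqvGen.setoid (G.edgeRel F) with hs
  haveI : Finite (Quotient s) := Quotient.finite s
  haveI := Fintype.ofFinite (Quotient s)
  let L : (G.V → ℚ) →ₗ[ℚ] ({e : G.E // e ∈ F} → ℚ) :=
    { toFun := fun x e => x (G.head e.1) - x (G.tail e.1)
      map_add' := by intro x y; funext e; simp [Pi.add_apply]; ring
      map_smul' := by intro c x; funext e; simp [Pi.smul_apply, smul_eq_mul]; ring }
  have hker : ∀ x ∈ LinearMap.ker L, ∀ a b : G.V,
      Relation.EqvGen (G.edgeRel F) a b → x a = x b := by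
    intro x hx a b hab
    induction hab with
    | rel a b hr =>
      obtain ⟨e, he, h1 | h1⟩ := hr
      · have h2 : L x ⟨e, he⟩ = 0 := congrFun (LinearMap.mem_ker.mp hx) ⟨e, he⟩
        have : x (G.head e) - x (G.tail e) = 0 := h2
        rw [h1.1, h1.2] at this; linarith
      · have h2 : L x ⟨e, he⟩ = 0 := congrFun (LinearMap.mem_ker.mp hx) ⟨e, he⟩
        have : x (G.head e) - x (G.tail e) = 0 := h2
        rw [h1.1, h1.2] at this; linarith
    | refl a => rfl
    | symm a b _ ih => exact ih.symm
    | trans a b c _ _ ih1 ih2 => exact ih1.trans ih2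
  let φ : (Quotient s → ℚ) →ₗ[ℚ] ↥(LinearMap.ker L) :=
    { toFun := fun g => ⟨fun v => g (Quotient.mk s v), by
        rw [LinearMap.mem_ker]
        funext e
        show g (Quotient.mk s (G.head e.1)) - g (Quotient.mk s (G.tail e.1)) = 0
        have heq : (Quotient.mk s (G.head e.1)) = Quotient.mk s (G.tail e.1) :=
          Quotient.sound (Relation.EqvGen.rel _ _ ⟨e.1, e.2, Or.inl ⟨rfl, rfl⟩⟩)
        rw [heq, sub_self]⟩
      map_add' := fun g1 g2 => rfl
      map_smul' := fun c g => rfl }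
  have hbij : Function.Bijective φ := by
    constructor
    · intro g1 g2 hg
      funext q
      induction q using Quotient.ind with
      | _ v => exact congrFun (congrArg Subtype.val hg) v
    · intro x
      refine ⟨fun q => Quotient.lift x.1 (fun a b hab => hker x.1 x.2 a b hab) q, ?_⟩
      apply Subtype.ext
      rfl
  have heq1 : Module.finrank ℚ ↥(LinearMap.ker L) = Nat.card (Quotient s) := by
    rw [← (LinearEquiv.ofBijective φ hbij).finrank_eq,
      Module.finrank_fintype_fun_eq_card, Nat.card_eq_fintype_card]
  have heq2 : Module.finrank ℚ ↥(LinearMap.range L) ≤ F.card := by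
    calc Module.finrank ℚ ↥(LinearMap.range L)
        ≤ Module.finrank ℚ ({e : G.E // e ∈ F} → ℚ) := Submodule.finrank_le _
      _ = Fintype.card {e : G.E // e ∈ F} := Module.finrank_fintype_fun_eq_card ℚ
      _ = F.card := Fintype.card_coe F
  have hrn := LinearMap.finrank_range_add_finrank_ker L
  rw [Module.finrank_fintype_fun_eq_card] at hrn
  have hnc : G.numComponents F = Nat.card (Quotient s) := rfl
  rw [hnc]
  omega

end Multigraph

/-- For the incidence matrix `B` of a connected multigraph, with rows `E₀` and columns
`V₀` deleted (the complements having equal size `r`, identified via a bijection `ι`),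
the following are equivalent: (a) the determinant of the resulting square matrix is
`±1`; (b) it is nonzero; (c) the edges not in `E₀` form a spanning `|V₀|`-forest in
which each tree contains exactly one vertex of `V₀`. -/
theorem incidence_submatrix_det_tfae
    (G : Multigraph) (hG : G.Connected)
    (E₀ : Finset G.E) (V₀ : Finset G.V) (r : ℕ)
    (hE : Fintype.card {e : G.E // e ∉ E₀} = r)
    (hV : Fintype.card {v : G.V // v ∉ V₀} = r)
    (ι : {e : G.E // e ∉ E₀} ≃ {v : G.V // v ∉ V₀}) :
    letI B : Matrix G.E G.V ℤ :=
      Matrix.of fun e v => if G.head e = v then 1 else if G.tail e = v then -1 else 0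
    letI B' : Matrix {e : G.E // e ∉ E₀} {e : G.E // e ∉ E₀} ℤ :=
      Matrix.of fun e f => B e.1 (ι f).1
    List.TFAE
      [ B'.det = 1 ∨ B'.det = -1,
        B'.det ≠ 0,
        G.IsForest E₀ᶜ ∧ ∀ v : G.V, ∃! w : G.V, w ∈ V₀ ∧ G.Reach E₀ᶜ w v ] := by
  classical
  set B : Matrix G.E G.V ℤ :=
      Matrix.of fun e v => if G.head e = v then 1 else if G.tail e = v then -1 else 0 with hB
  set B' : Matrix {e : G.E // e ∉ E₀} {e : G.E // e ∉ E₀} ℤ :=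
      Matrix.of fun e f => B e.1 (ι f).1 with hB'
  set F : Finset G.E := E₀ᶜ with hF
  set s := Relation.EqvGen.setoid (G.edgeRel F) with hs
  haveI : Finite (Quotient s) := Quotient.finite s
  haveI := Fintype.ofFinite (Quotient s)
  have hFcard : F.card = r := by
    rw [← hE, ← Fintype.card_coe F]
    exact Fintype.card_congr (Equiv.subtypeEquivRight (fun e => Finset.mem_compl))
  have hVcard : Fintype.card G.V = V₀.card + r := by
    rw [← hV, ← Fintype.card_coe V₀]
    rw [← Fintype.card_sum]
    apply Fintype.card_congr
    exact (Equiv.sumCompl (· ∈ V₀)).symm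
  tfae_have 1 → 2 := by
    intro h h0
    rcases h with h | h <;> omega
  tfae_have 2 → 3 := by
    intro hdet
    have hclass : ∀ v : G.V, ∃ w ∈ V₀, Quotient.mk s w = Quotient.mk s v := by
      by_contra hc
      push_neg at hc
      obtain ⟨v, hv⟩ := hc
      set y : G.V → ℤ := fun w => if Quotient.mk s w = Quotient.mk s v then 1 else 0 with hy
      have hnotV0 : ∀ w, Quotient.mk s w = Quotient.mk s v → w ∉ V₀ := fun w h hw => hv w hw h
      set x : {e : G.E // e ∉ E₀} → ℤ := fun f => y (ι f).1 with hx
      have hmul : B'.mulVec x = 0 := by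
        funext e
        show ∑ f, B' e f * x f = 0
        have step1 : ∑ f, B' e f * x f = ∑ w : {v : G.V // v ∉ V₀}, B e.1 w.1 * y w.1 :=
          Equiv.sum_comp ι (fun w => B e.1 w.1 * y w.1)
        have step2 : ∑ w : {v : G.V // v ∉ V₀}, B e.1 w.1 * y w.1
            = ∑ w : G.V, B e.1 w * y w := by
          rw [← Finset.sum_subtype V₀ᶜ (fun w => Finset.mem_compl) (fun w => B e.1 w * y w)]
          apply Finset.sum_subset (Finset.subset_univ _)
          intro w _ hw
          rw [Finset.mem_compl, not_not] at hw
          have : y w = 0 := by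
            rw [hy]
            simp only []
            rw [if_neg]
            intro hq
            exact hnotV0 w hq hw
          rw [this, mul_zero]
        have step3 : ∑ w : G.V, B e.1 w * y w = y (G.head e.1) - y (G.tail e.1) := by
          have hptw : ∀ w, B e.1 w * y w =
              (if G.head e.1 = w then y w else 0) + (if G.tail e.1 = w then -(y w) else 0) := by
            intro w
            by_cases h1 : G.head e.1 = w <;> by_cases h2 : G.tail e.1 = w
            · exact absurd (h1.trans h2.symm) (G.loopless e.1)
            · rw [hB]; simp [h1, h2]
            · rw [hB]; simp [h1, h2]
            · rw [hB]; simp [h1, h2]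
          rw [Finset.sum_congr rfl (fun w _ => hptw w), Finset.sum_add_distrib,
            Finset.sum_ite_eq, Finset.sum_ite_eq]
          simp [sub_eq_add_neg]
        have hedge : Quotient.mk s (G.head e.1) = Quotient.mk s (G.tail e.1) :=
          Quotient.sound (Relation.EqvGen.rel _ _
            ⟨e.1, Finset.mem_compl.mpr e.2, Or.inl ⟨rfl, rfl⟩⟩)
        have hyy : y (G.head e.1) = y (G.tail e.1) := by rw [hy]; simp only []; rw [hedge]
        rw [step1, step2, step3, hyy, sub_self]
      have hx0 := Matrix.eq_zero_of_mulVec_eq_zero hdet hmul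
      have hvV : v ∉ V₀ := hnotV0 v rfl
      have h1 := congrFun hx0 (ι.symm ⟨v, hvV⟩)
      rw [hx] at h1
      simp only [Equiv.apply_symm_apply] at h1
      rw [hy] at h1
      simp at h1
    let ψ : {w : G.V // w ∈ V₀} → Quotient s := fun w => Quotient.mk s w.1
    have hsurj : Function.Surjective ψ := by
      intro q
      induction q using Quotient.ind with
      | _ v =>
        obtain ⟨w, hw, h⟩ := hclass v
        exact ⟨⟨w, hw⟩, h⟩
    have hcard1 : Nat.card (Quotient s) ≤ V₀.card := by
      calc Nat.card (Quotient s) = Fintype.card (Quotient s) := Nat.card_eq_fintype_card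
        _ ≤ Fintype.card {w : G.V // w ∈ V₀} := Fintype.card_le_of_surjective ψ hsurj
        _ = V₀.card := Fintype.card_coe V₀
    have hlow := G.card_le_numComponents_add_card F
    have hnc : G.numComponents F = Nat.card (Quotient s) := rfl
    have hforest : G.IsForest F := by
      unfold Multigraph.IsForest
      omega
    have hcard2 : Fintype.card {w : G.V // w ∈ V₀} = Fintype.card (Quotient s) := by
      have e1 : Fintype.card {w : G.V // w ∈ V₀} = V₀.card := Fintype.card_coe V₀
      have e2 : Nat.card (Quotient s) = Fintype.card (Quotient s) := Nat.card_eq_fintype_card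
      unfold Multigraph.IsForest at hforest
      omega
    have hinj : Function.Injective ψ :=
      ((Fintype.bijective_iff_surjective_and_card ψ).mpr ⟨hsurj, hcard2⟩).1
    refine ⟨hforest, ?_⟩
    intro v
    obtain ⟨w, hw, hq⟩ := hclass v
    refine ⟨w, ⟨hw, Quotient.exact hq⟩, ?_⟩
    rintro w' ⟨hw', hr'⟩
    have hψ : ψ ⟨w', hw'⟩ = ψ ⟨w, hw⟩ := by
      show Quotient.mk s w' = Quotient.mk s w
      rw [hq]
      exact Quotient.sound hr'
    exact congrArg Subtype.val (hinj hψ)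
  tfae_have 3 → 1 := by
    rintro ⟨-, hreach⟩
    have hsymm : Symmetric (G.edgeRel F) := by
      rintro a b ⟨e, he, h⟩
      exact ⟨e, he, h.symm⟩
    let W : ℕ → G.V → Prop := fun n =>
      Nat.rec (fun v => v ∈ V₀) (fun _ Wn v => ∃ u, G.edgeRel F v u ∧ Wn u) n
    have hWex : ∀ v, ∃ n, W n v := by
      intro v
      obtain ⟨w, ⟨hw, hr⟩, -⟩ := hreach v
      have heqv_rt : ∀ a b : G.V, Relation.EqvGen (G.edgeRel F) a b →
          Relation.ReflTransGen (G.edgeRel F) a b := by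
        intro a b hab
        induction hab with
        | rel a b h => exact Relation.ReflTransGen.single h
        | refl a => exact Relation.ReflTransGen.refl
        | symm a b _ ih => exact (@Relation.ReflTransGen.stdSymm _ _ ⟨fun a b h => hsymm h⟩).symm _ _ ih
        | trans a b c _ _ ih1 ih2 => exact ih1.trans ih2
      have hrt : Relation.ReflTransGen (G.edgeRel F) w v := heqv_rt w v hr
      clear hr
      induction hrt with
      | refl => exact ⟨0, hw⟩
      | tail _ h2 ih =>
        obtain ⟨n, hn⟩ := ih
        exact ⟨n + 1, _, hsymm h2, hn⟩
    let hgt : G.V → ℕ := fun v => sInf {n | W n v}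
    have hWspec : ∀ v, W (hgt v) v := fun v => Nat.sInf_mem (hWex v)
    have hmin : ∀ v n, W n v → hgt v ≤ n := fun v n hn => Nat.sInf_le hn
    have hpar : ∀ v : {v : G.V // v ∉ V₀}, ∃ e ∈ F, ∃ u,
        ((G.head e = v.1 ∧ G.tail e = u) ∨ (G.head e = u ∧ G.tail e = v.1)) ∧
        hgt u < hgt v.1 := by
      rintro ⟨v, hv⟩
      have h0 : hgt v ≠ 0 := by
        intro h0
        have := hWspec v
        rw [h0] at this
        exact hv this
      obtain ⟨n, hn⟩ : ∃ n, hgt v = n + 1 := ⟨hgt v - 1, by omega⟩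
      have hWv := hWspec v
      rw [hn] at hWv
      obtain ⟨u, ⟨e, he, hor⟩, hWu⟩ := hWv
      refine ⟨e, he, u, hor, ?_⟩
      show hgt u < hgt v
      have := hmin u n hWu
      omega
    choose p hpF pu hpu hph using hpar
    let P : {v : G.V // v ∉ V₀} → {e : G.E // e ∉ E₀} :=
      fun v => ⟨p v, Finset.mem_compl.mp (hpF v)⟩
    have hPinj : Function.Injective P := by
      intro v w hvw
      have hpe : p v = p w := congrArg Subtype.val hvw
      by_contra hne
      have hv1w1 : v.1 ≠ w.1 := fun h => hne (Subtype.ext h)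
      have hphv := hph v
      have hphw := hph w
      rcases hpu v with ⟨h1, h2⟩ | ⟨h1, h2⟩ <;> rcases hpu w with ⟨h3, h4⟩ | ⟨h3, h4⟩ <;>
        rw [hpe] at h1 h2
      · exact hv1w1 (h1.symm.trans h3)
      · have e1 : pu w = v.1 := h3.symm.trans h1
        have e2 : pu v = w.1 := h2.symm.trans h4
        rw [e1] at hphw; rw [e2] at hphv; omega
      · have e1 : pu w = v.1 := h4.symm.trans h2
        have e2 : pu v = w.1 := h1.symm.trans h3
        rw [e1] at hphw; rw [e2] at hphv; omega
      · exact hv1w1 (h2.symm.trans h4)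
    have hcardVE : Fintype.card {v : G.V // v ∉ V₀} = Fintype.card {e : G.E // e ∉ E₀} := by
      rw [hE, hV]
    have hPbij : Function.Bijective P :=
      (Fintype.bijective_iff_injective_and_card P).mpr ⟨hPinj, hcardVE⟩
    let σ : {v : G.V // v ∉ V₀} ≃ {e : G.E // e ∉ E₀} := Equiv.ofBijective P hPbij
    set M : Matrix {v : G.V // v ∉ V₀} {v : G.V // v ∉ V₀} ℤ :=
      Matrix.of (fun v w => B (p v) w.1) with hM
    have hMdet : M.det = ∏ v, M v v := by
      apply det_eq_prod_diag M (fun v => hgt v.1)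
      intro i j hMij
      have hend : G.head (p i) = j.1 ∨ G.tail (p i) = j.1 := by
        by_contra hc
        push_neg at hc
        apply hMij
        rw [hM, hB]
        show (if G.head (p i) = j.1 then (1:ℤ) else if G.tail (p i) = j.1 then -1 else 0) = 0
        rw [if_neg hc.1, if_neg hc.2]
      rcases hpu i with ⟨h1, h2⟩ | ⟨h1, h2⟩ <;> rcases hend with h3 | h3
      · exact Or.inl (Subtype.ext (h3.symm.trans h1))
      · refine Or.inr ?_
        have : pu i = j.1 := h2.symm.trans h3
        rw [← this]
        exact hph i
      · refine Or.inr ?_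
        have : pu i = j.1 := h1.symm.trans h3
        rw [← this]
        exact hph i
      · exact Or.inl (Subtype.ext (h3.symm.trans h2))
    have hdiag : ∀ v, M v v = 1 ∨ M v v = -1 := by
      intro v
      rcases hpu v with ⟨h1, _⟩ | ⟨h1, h2⟩
      · left
        rw [hM, hB]
        show (if G.head (p v) = v.1 then (1:ℤ) else if G.tail (p v) = v.1 then -1 else 0) = 1
        rw [if_pos h1]
      · right
        rw [hM, hB]
        show (if G.head (p v) = v.1 then (1:ℤ) else if G.tail (p v) = v.1 then -1 else 0) = -1
        have hne : G.head (p v) ≠ v.1 := by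
          rw [← h2]
          exact G.loopless (p v)
        rw [if_neg hne, if_pos h2]
    have hMunit : M.det = 1 ∨ M.det = -1 := by
      have hsq : (∏ v, M v v) * (∏ v, M v v) = 1 := by
        rw [← Finset.prod_mul_distrib]
        apply Finset.prod_eq_one
        intro v _
        rcases hdiag v with h | h <;> rw [h] <;> norm_num
      rw [hMdet]
      exact Int.isUnit_iff.mp (IsUnit.of_mul_eq_one _ hsq)
    let π : {e : G.E // e ∉ E₀} ≃ {e : G.E // e ∉ E₀} := ι.trans σ
    have hB'eq : B' = (M.submatrix σ.symm σ.symm).submatrix id π := by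
      ext e f
      show B e.1 (ι f).1 = M (σ.symm e) (σ.symm (π f))
      have h1 : σ.symm (π f) = ι f := by
        show σ.symm (σ (ι f)) = ι f
        exact Equiv.symm_apply_apply σ (ι f)
      rw [h1]
      show B e.1 (ι f).1 = B (p (σ.symm e)) (ι f).1
      have h2 : p (σ.symm e) = e.1 := by
        have h3 : σ (σ.symm e) = e := Equiv.apply_symm_apply σ e
        exact congrArg Subtype.val h3
      rw [h2]
    rw [hB'eq, Matrix.det_permute' π, Matrix.det_submatrix_equiv_self]
    rcases Int.units_eq_one_or (Equiv.Perm.sign π) with hsgn | hsgn <;>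
      rw [hsgn] <;> rcases hMunit with hm | hm <;> rw [hm] <;> simp
  tfae_finish
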